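/- Let Ṽ = (I_{pm} ⊗ Λ_{K-1})(I_{pm} ⊗ V_{K-1})Λ, where Λ_{K-1} = diag(1,2,…,K−1), V_{K-1} is the (K−1)×n Vandermonde matrix with columns (1, λⱼ, …, λⱼ^{K-2})ᵀ, and Λ is the stacked (pm·n)×n matrix of diagonal matrices Λ_{ij} = diag(c_{i1}b_{1j}, …, c_{in}b_{nj}). Then σ_min(Ṽ)² ≤ K² · ‖Λ‖² · λ_{⌊n/(pm)⌋}(V_{K-1} V_{K-1}ᵀ). -/

import Mathlib

open Matrix MeasureTheory
open scoped BigOperators Kronecker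

noncomputable def specNorm {α β : Type*} [Fintype α] [Fintype β] [DecidableEq β]
    (M : Matrix α β ℝ) : ℝ :=
  ‖LinearMap.toContinuousLinearMap (Matrix.toEuclideanLin M)‖

def frobSq {α β : Type*} [Fintype α] [Fintype β] (M : Matrix α β ℝ) : ℝ :=
  ∑ i, ∑ j, (M i j) ^ 2

noncomputable def lambdaMin {β : Type*} [Fintype β] (M : Matrix β β ℝ) : ℝ :=
  ⨅ x : {x : β → ℝ // ∑ i, (x i) ^ 2 = 1}, x.1 ⬝ᵥ (M *ᵥ x.1)

noncomputable def lambdaMax {β : Type*} [Fintype β] (M : Matrix β β ℝ) : ℝ :=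
  ⨆ x : {x : β → ℝ // ∑ i, (x i) ^ 2 = 1}, x.1 ⬝ᵥ (M *ᵥ x.1)

noncomputable def svals {α : Type*} [Fintype α] {N : ℕ} (M : Matrix α (Fin N) ℝ) : Fin N → ℝ :=
  fun j => Real.sqrt ((show (Mᵀ * M).IsHermitian by simpa using Matrix.isHermitian_conjTranspose_mul_self M).eigenvalues j)

noncomputable def sigmaDesc {α : Type*} [Fintype α] {N : ℕ} (M : Matrix α (Fin N) ℝ) (k : Fin N) : ℝ :=
  (svals M ∘ Tuple.sort (svals M)) k.rev

noncomputable def eigDesc {N : ℕ} {M : Matrix (Fin N) (Fin N) ℝ} (hM : M.IsHermitian) (k : Fin N) : ℝ :=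
  (hM.eigenvalues ∘ Tuple.sort hM.eigenvalues) k.rev

section helpers

lemma spectral_quadform {N : ℕ} {A : Matrix (Fin N) (Fin N) ℝ} (hA : A.IsHermitian)
    (z : Fin N → ℝ) (μ : ℝ)
    (h : ∀ t, hA.eigenvalues t ≤ μ ∨
      (star (hA.eigenvectorUnitary : Matrix (Fin N) (Fin N) ℝ) *ᵥ z) t = 0) :
    z ⬝ᵥ (A *ᵥ z) ≤ μ * (z ⬝ᵥ z) := by
  set U : Matrix (Fin N) (Fin N) ℝ := (hA.eigenvectorUnitary : Matrix (Fin N) (Fin N) ℝ) with hU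
  set q : Fin N → ℝ := star U *ᵥ z with hqdef
  have hUU : U * star U = 1 := (Matrix.mem_unitaryGroup_iff).mp hA.eigenvectorUnitary.2
  have hstar : star U = Uᵀ := by ext i j; simp [Matrix.conjTranspose_apply]
  have hzU : z ᵥ* U = q := by
    rw [← Matrix.transpose_transpose U, Matrix.vecMul_transpose, ← hstar, hqdef]
  have hspec : A = U * (diagonal hA.eigenvalues * star U) := by
    have := hA.spectral_theorem
    rw [show (RCLike.ofReal ∘ hA.eigenvalues : Fin N → ℝ) = hA.eigenvalues by
      rw [RCLike.ofReal_real_eq_id]; exact Function.id_comp _] at this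
    rw [hU]
    rw [Unitary.conjStarAlgAut_apply] at this; exact this.trans (Matrix.mul_assoc _ _ _)
  have h1 : z ⬝ᵥ z = q ⬝ᵥ q :=
    calc z ⬝ᵥ z = z ⬝ᵥ ((U * star U) *ᵥ z) := by rw [hUU, Matrix.one_mulVec]
      _ = z ⬝ᵥ (U *ᵥ q) := by rw [← Matrix.mulVec_mulVec, ← hqdef]
      _ = (z ᵥ* U) ⬝ᵥ q := Matrix.dotProduct_mulVec _ _ _
      _ = q ⬝ᵥ q := by rw [hzU]
  have h2 : z ⬝ᵥ (A *ᵥ z) = ∑ t, hA.eigenvalues t * (q t * q t) := by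
    conv_lhs => rw [hspec, ← Matrix.mulVec_mulVec, ← Matrix.mulVec_mulVec, ← hqdef,
      Matrix.dotProduct_mulVec, hzU]
    simp only [dotProduct, Matrix.mulVec_diagonal]
    exact Finset.sum_congr rfl fun t _ => by ring
  have h3 : ∑ t, hA.eigenvalues t * (q t * q t) ≤ μ * (q ⬝ᵥ q) := by
    rw [dotProduct, Finset.mul_sum]
    refine Finset.sum_le_sum fun t _ => ?_
    rcases h t with ht | ht
    · exact mul_le_mul_of_nonneg_right ht (mul_self_nonneg _)
    · rw [ht]; simp
  rw [h1, h2]; exact h3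

lemma dot_self_nonneg' {ι : Type*} [Fintype ι] (v : ι → ℝ) : 0 ≤ v ⬝ᵥ v :=
  Finset.sum_nonneg fun _ _ => mul_self_nonneg _

lemma cs_bound {N n : ℕ} (VK : Matrix (Fin N) (Fin n) ℝ) (y : Fin n → ℝ) (μ : ℝ) (hμ : 0 ≤ μ)
    (hAz : (VK *ᵥ y) ⬝ᵥ ((VK * VKᴴ) *ᵥ (VK *ᵥ y)) ≤ μ * ((VK *ᵥ y) ⬝ᵥ (VK *ᵥ y))) :
    (VK *ᵥ y) ⬝ᵥ (VK *ᵥ y) ≤ μ * (y ⬝ᵥ y) := by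
  set z : Fin N → ℝ := VK *ᵥ y with hz
  have hconj : VKᴴ = VKᵀ := by ext i j; simp [Matrix.conjTranspose_apply]
  have h4 : z ⬝ᵥ z = y ⬝ᵥ (VKᵀ *ᵥ z) := by
    conv_lhs => rw [hz, dotProduct_comm, Matrix.dotProduct_mulVec,
      ← Matrix.transpose_transpose VK, Matrix.vecMul_transpose, Matrix.transpose_transpose,
      dotProduct_comm]
  have h6 : (VKᵀ *ᵥ z) ⬝ᵥ (VKᵀ *ᵥ z) = z ⬝ᵥ ((VK * VKᴴ) *ᵥ z) := by
    rw [Matrix.dotProduct_mulVec, Matrix.vecMul_transpose, Matrix.mulVec_mulVec, hconj,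
      dotProduct_comm]
  have hcs : (z ⬝ᵥ z) ^ 2 ≤ (y ⬝ᵥ y) * (z ⬝ᵥ ((VK * VKᴴ) *ᵥ z)) := by
    calc (z ⬝ᵥ z) ^ 2 = (∑ k, y k * (VKᵀ *ᵥ z) k) ^ 2 := by rw [h4]; rfl
      _ ≤ (∑ k, y k ^ 2) * ∑ k, (VKᵀ *ᵥ z) k ^ 2 :=
          Finset.sum_mul_sq_le_sq_mul_sq _ _ _
      _ = (y ⬝ᵥ y) * ((VKᵀ *ᵥ z) ⬝ᵥ (VKᵀ *ᵥ z)) := by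
          rw [dotProduct, dotProduct]
          congr 1 <;> exact Finset.sum_congr rfl fun k _ => (pow_two _)
      _ = (y ⬝ᵥ y) * (z ⬝ᵥ ((VK * VKᴴ) *ᵥ z)) := by rw [h6]
  rcases eq_or_lt_of_le (dot_self_nonneg' z) with hzz | hzz
  · rw [← hzz]; exact mul_nonneg hμ (dot_self_nonneg' y)
  · have h7 : (z ⬝ᵥ z) * (z ⬝ᵥ z) ≤ (μ * (y ⬝ᵥ y)) * (z ⬝ᵥ z) := by
      have := hcs.trans (mul_le_mul_of_nonneg_left hAz (dot_self_nonneg' y))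
      nlinarith [this]
    exact le_of_mul_le_mul_right h7 hzz

lemma norm_symm_sq {γ : Type*} [Fintype γ] (v : γ → ℝ) :
    ‖(WithLp.equiv 2 (γ → ℝ)).symm v‖ ^ 2 = v ⬝ᵥ v := by
  rw [EuclideanSpace.norm_eq, Real.sq_sqrt (Finset.sum_nonneg fun i _ => sq_nonneg _)]
  exact Finset.sum_congr rfl fun i _ => by simp [Real.norm_eq_abs, sq_abs, pow_two]

lemma mulVec_dot_le_specNorm {ι κ : Type*} [Fintype ι] [Fintype κ] [DecidableEq κ]
    (M : Matrix ι κ ℝ) (x : κ → ℝ) :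
    (M *ᵥ x) ⬝ᵥ (M *ᵥ x) ≤ specNorm M ^ 2 * (x ⬝ᵥ x) := by
  have h := (LinearMap.toContinuousLinearMap (Matrix.toEuclideanLin M)).le_opNorm
      ((WithLp.equiv 2 (κ → ℝ)).symm x)
  have hTx : (LinearMap.toContinuousLinearMap (Matrix.toEuclideanLin M))
      ((WithLp.equiv 2 (κ → ℝ)).symm x) = (WithLp.equiv 2 (ι → ℝ)).symm (M *ᵥ x) := by
    simp [LinearMap.coe_toContinuousLinearMap']
  rw [hTx] at h
  have h2 := pow_le_pow_left₀ (norm_nonneg _) h 2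
  rw [norm_symm_sq (M *ᵥ x), mul_pow, norm_symm_sq x] at h2
  exact h2

end helpers

/-- bound `σ_min(Ṽ)² ≤ K²‖Λ‖²λ_{⌊n/(pm)⌋}(V_{K-1}V_{K-1}ᵀ)` for
`Ṽ = (I ⊗ Λ_{K-1})(I ⊗ V_{K-1})Λ`. -/
theorem stmt8 (p m K n : ℕ) (hK : 1 ≤ K)
    (lam : Fin n → ℝ) (b : Fin n → Fin p → ℝ) (c : Fin m → Fin n → ℝ)
    (VK : Matrix (Fin (K - 1)) (Fin n) ℝ)
    (hVK : ∀ (t : Fin (K - 1)) (j : Fin n), VK t j = lam j ^ (t : ℕ))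
    (Λdiag : Matrix (Fin (K - 1)) (Fin (K - 1)) ℝ)
    (hΛdiag : Λdiag = Matrix.diagonal (fun t : Fin (K - 1) => (t : ℝ) + 1))
    (Λ : Matrix ((Fin m × Fin p) × Fin n) (Fin n) ℝ)
    (hΛ : ∀ (i : Fin m) (j : Fin p) (k k' : Fin n),
      Λ ((i, j), k) k' = if k = k' then c i k * b k j else 0)
    (Vt : Matrix ((Fin m × Fin p) × Fin (K - 1)) (Fin n) ℝ)
    (hVt : Vt = ((1 : Matrix (Fin m × Fin p) (Fin m × Fin p) ℝ) ⊗ₖ Λdiag) *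
      (((1 : Matrix (Fin m × Fin p) (Fin m × Fin p) ℝ) ⊗ₖ VK) * Λ))
    (hrank : Vt.rank = n)
    (hidx : n / (p * m) - 1 < K - 1) :
    lambdaMin (Vtᵀ * Vt) ≤ (K : ℝ) ^ 2 * specNorm Λ ^ 2 *
      eigDesc (Matrix.isHermitian_mul_conjTranspose_self VK) ⟨n / (p * m) - 1, hidx⟩ := by
  classical
  have hA := Matrix.isHermitian_mul_conjTranspose_self VK
  set μ := eigDesc (Matrix.isHermitian_mul_conjTranspose_self VK) ⟨n / (p * m) - 1, hidx⟩ with hμdef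
  have hμeig : μ = hA.eigenvalues
      (Tuple.sort hA.eigenvalues ((⟨n / (p * m) - 1, hidx⟩ : Fin (K - 1)).rev)) := rfl
  have hμ0 : 0 ≤ μ := by
    rw [hμeig]
    exact (Matrix.posSemidef_self_mul_conjTranspose VK).eigenvalues_nonneg _
  have hRHS0 : 0 ≤ (K : ℝ) ^ 2 * specNorm Λ ^ 2 * μ :=
    mul_nonneg (mul_nonneg (by positivity) (sq_nonneg _)) hμ0
  rcases Nat.eq_zero_or_pos n with hn | hn
  · subst hn
    have hempty : IsEmpty {x : Fin 0 → ℝ // ∑ i, (x i) ^ 2 = 1} := by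
      constructor; rintro ⟨x, hx⟩; simp at hx
    unfold lambdaMin
    rw [Real.iInf_of_isEmpty]
    exact hRHS0
  -- main case : n ≥ 1
  have hpm : 0 < p * m := by
    rcases Nat.eq_zero_or_pos (p * m) with h0 | h0
    · exfalso
      have hcard := Vt.rank_le_card_height
      rw [hrank] at hcard
      simp only [Fintype.card_prod, Fintype.card_fin] at hcard
      rcases Nat.mul_eq_zero.mp h0 with h | h <;> simp [h] at hcard <;> omega
    · exact h0
  set U : Matrix (Fin (K - 1)) (Fin (K - 1)) ℝ :=
    (hA.eigenvectorUnitary : Matrix (Fin (K - 1)) (Fin (K - 1)) ℝ) with hUdef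
  set σ : Equiv.Perm (Fin (K - 1)) := Tuple.sort hA.eigenvalues with hσ
  set v : Fin (K - 1) := (⟨n / (p * m) - 1, hidx⟩ : Fin (K - 1)).rev with hv
  have hvval : (v : ℕ) = (K - 1) - (n / (p * m) - 1 + 1) := by rw [hv]; exact Fin.val_rev _
  let g : Fin m × Fin p → Matrix (Fin n) (Fin n) ℝ :=
    fun a => Matrix.diagonal (fun k => c a.1 k * b k a.2)
  -- the subspace constraint index type
  have hcardS : Fintype.card {s : Fin (K - 1) // v < s} ≤ n / (p * m) - 1 := by
    have hlt : ∀ s : {s : Fin (K - 1) // v < s},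
        s.1.val - ((v : ℕ) + 1) < n / (p * m) - 1 := by
      intro s
      have h1 := s.1.isLt
      have h2 : (v : ℕ) < s.1.val := Fin.lt_def.mp s.2
      have h3 := hvval
      have h4 := hidx
      omega
    have hinj : Function.Injective (fun s : {s : Fin (K - 1) // v < s} =>
        (⟨s.1.val - ((v : ℕ) + 1), hlt s⟩ : Fin (n / (p * m) - 1))) := by
      intro s1 s2 h
      have h3 : s1.1.val - ((v : ℕ) + 1) = s2.1.val - ((v : ℕ) + 1) := congrArg Fin.val h
      have h1 : (v : ℕ) < s1.1.val := Fin.lt_def.mp s1.2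
      have h2 : (v : ℕ) < s2.1.val := Fin.lt_def.mp s2.2
      exact Subtype.ext (Fin.ext (by omega))
    simpa using Fintype.card_le_of_injective _ hinj
  have hdim : p * m * Fintype.card {s : Fin (K - 1) // v < s} < n := by
    have e1 : p * m * Fintype.card {s : Fin (K - 1) // v < s} ≤ p * m * (n / (p * m) - 1) :=
      Nat.mul_le_mul_left _ hcardS
    have e2 : p * m * (n / (p * m) - 1) = p * m * (n / (p * m)) - p * m := by
      rw [Nat.sub_one, Nat.mul_pred]
    have e3 : n / (p * m) * (p * m) ≤ n := Nat.div_mul_le_self n (p * m)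
    have e4 : p * m * (n / (p * m)) = n / (p * m) * (p * m) := Nat.mul_comm _ _
    omega
  let φ : (Fin n → ℝ) →ₗ[ℝ] ((Fin m × Fin p) × {s : Fin (K - 1) // v < s} → ℝ) :=
    { toFun := fun x => fun q => (star U *ᵥ (VK *ᵥ (g q.1 *ᵥ x))) (σ q.2.1)
      map_add' := fun x y => by
        funext q; simp [Matrix.mulVec_add]
      map_smul' := fun r x => by
        funext q; simp [Matrix.mulVec_smul] }
  have hker : LinearMap.ker φ ≠ ⊥ := by
    intro hbot
    have hinj : Function.Injective φ := LinearMap.ker_eq_bot.mp hbot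
    have hle := LinearMap.finrank_le_finrank_of_injective hinj
    simp only [Module.finrank_pi, Fintype.card_prod, Fintype.card_fin] at hle
    have e : m * p * Fintype.card {s : Fin (K - 1) // v < s}
        = p * m * Fintype.card {s : Fin (K - 1) // v < s} := by rw [Nat.mul_comm m p]
    omega
  obtain ⟨x, hxmem, hx0⟩ := (Submodule.ne_bot_iff _).mp hker
  have hφx : ∀ (a : Fin m × Fin p) (s : {s : Fin (K - 1) // v < s}),
      (star U *ᵥ (VK *ᵥ (g a *ᵥ x))) (σ s.1) = 0 := by
    intro a s
    exact congrFun (LinearMap.mem_ker.mp hxmem) (a, s)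
  -- rows of Λ
  have hΛrow : ∀ (aj : Fin m × Fin p) (k : Fin n), (Λ *ᵥ x) (aj, k) = (g aj *ᵥ x) k := by
    rintro ⟨i, jj⟩ k
    show (Λ *ᵥ x) ((i, jj), k) = (Matrix.diagonal (fun k => c i k * b k jj) *ᵥ x) k
    rw [Matrix.mulVec_diagonal]
    simp [Matrix.mulVec, dotProduct, hΛ, ite_mul, mul_assoc]
  -- action of Vt on x
  have hVtx : ∀ (a : Fin m × Fin p) (t : Fin (K - 1)),
      (Vt *ᵥ x) (a, t) = ((t : ℝ) + 1) * (VK *ᵥ (g a *ᵥ x)) t := by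
    intro a t
    have hy : (Λ *ᵥ x) = fun r : (Fin m × Fin p) × Fin n => (g r.1 *ᵥ x) r.2 := by
      funext r; obtain ⟨aj, k⟩ := r; exact hΛrow aj k
    have hQ : (((1 : Matrix (Fin m × Fin p) (Fin m × Fin p) ℝ) ⊗ₖ VK) *ᵥ
        fun r : (Fin m × Fin p) × Fin n => (g r.1 *ᵥ x) r.2)
        = fun r : (Fin m × Fin p) × Fin (K - 1) => (VK *ᵥ (g r.1 *ᵥ x)) r.2 := by
      funext r; obtain ⟨a', t'⟩ := r
      simp [Matrix.mulVec, dotProduct, Fintype.sum_prod_type, Matrix.one_apply,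
        ite_mul, Matrix.kroneckerMap_apply]
    rw [hVt, ← Matrix.mulVec_mulVec, ← Matrix.mulVec_mulVec, hy, hQ]
    simp [hΛdiag, Matrix.mulVec, dotProduct, Fintype.sum_prod_type, Matrix.one_apply,
      Matrix.kroneckerMap_apply, Matrix.diagonal, ite_mul, mul_comm]
  -- per-block spectral bound
  have hper : ∀ a : Fin m × Fin p,
      (VK *ᵥ (g a *ᵥ x)) ⬝ᵥ (VK *ᵥ (g a *ᵥ x)) ≤ μ * ((g a *ᵥ x) ⬝ᵥ (g a *ᵥ x)) := by
    intro a
    apply cs_bound VK (g a *ᵥ x) μ hμ0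
    apply spectral_quadform hA
    intro t
    by_cases hts : v < σ.symm t
    · right
      have h := hφx a ⟨σ.symm t, hts⟩
      rw [← hUdef]
      simpa using h
    · left
      rw [hμeig]
      have h1 : hA.eigenvalues t = (hA.eigenvalues ∘ σ) (σ.symm t) := by simp
      rw [h1]
      exact Tuple.monotone_sort hA.eigenvalues (not_lt.mp hts)
  -- the main estimate
  have hsum : (Vt *ᵥ x) ⬝ᵥ (Vt *ᵥ x) ≤ (K : ℝ) ^ 2 * μ * ((Λ *ᵥ x) ⬝ᵥ (Λ *ᵥ x)) := by
    have e0 : (Vt *ᵥ x) ⬝ᵥ (Vt *ᵥ x)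
        = ∑ a : Fin m × Fin p, ∑ t : Fin (K - 1),
          (((t : ℝ) + 1) * (VK *ᵥ (g a *ᵥ x)) t) ^ 2 := by
      rw [dotProduct, Fintype.sum_prod_type]
      exact Finset.sum_congr rfl fun a _ => Finset.sum_congr rfl fun t _ => by
        rw [hVtx a t]; ring
    have e1 : ∀ (a : Fin m × Fin p) (t : Fin (K - 1)),
        (((t : ℝ) + 1) * (VK *ᵥ (g a *ᵥ x)) t) ^ 2
          ≤ (K : ℝ) ^ 2 * ((VK *ᵥ (g a *ᵥ x)) t) ^ 2 := by
      intro a t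
      have htn : (t : ℕ) + 1 ≤ K := by have := t.isLt; omega
      have ht : ((t : ℝ) + 1) ≤ (K : ℝ) := by exact_mod_cast htn
      have h0 : (0 : ℝ) ≤ (t : ℝ) + 1 := by positivity
      calc (((t : ℝ) + 1) * (VK *ᵥ (g a *ᵥ x)) t) ^ 2
          = ((t : ℝ) + 1) ^ 2 * ((VK *ᵥ (g a *ᵥ x)) t) ^ 2 := by ring
        _ ≤ (K : ℝ) ^ 2 * ((VK *ᵥ (g a *ᵥ x)) t) ^ 2 :=
            mul_le_mul_of_nonneg_right (pow_le_pow_left₀ h0 ht 2) (sq_nonneg _)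
    calc (Vt *ᵥ x) ⬝ᵥ (Vt *ᵥ x)
        = ∑ a : Fin m × Fin p, ∑ t : Fin (K - 1),
            (((t : ℝ) + 1) * (VK *ᵥ (g a *ᵥ x)) t) ^ 2 := e0
      _ ≤ ∑ a : Fin m × Fin p, ∑ t : Fin (K - 1),
            (K : ℝ) ^ 2 * ((VK *ᵥ (g a *ᵥ x)) t) ^ 2 :=
          Finset.sum_le_sum fun a _ => Finset.sum_le_sum fun t _ => e1 a t
      _ = (K : ℝ) ^ 2 * ∑ a : Fin m × Fin p,
            (VK *ᵥ (g a *ᵥ x)) ⬝ᵥ (VK *ᵥ (g a *ᵥ x)) := by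
          simp only [dotProduct, Finset.mul_sum]
          exact Finset.sum_congr rfl fun a _ => Finset.sum_congr rfl fun t _ => by ring
      _ ≤ (K : ℝ) ^ 2 * ∑ a : Fin m × Fin p, μ * ((g a *ᵥ x) ⬝ᵥ (g a *ᵥ x)) :=
          mul_le_mul_of_nonneg_left (Finset.sum_le_sum fun a _ => hper a) (by positivity)
      _ = (K : ℝ) ^ 2 * μ * ((Λ *ᵥ x) ⬝ᵥ (Λ *ᵥ x)) := by
          simp only [dotProduct, Finset.mul_sum, Fintype.sum_prod_type]
          refine Finset.sum_congr rfl fun i _ => Finset.sum_congr rfl fun jj _ =>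
            Finset.sum_congr rfl fun k _ => ?_
          rw [hΛrow (i, jj) k]; ring
  have hspecΛ := mulVec_dot_le_specNorm Λ x
  have hfinal : (Vt *ᵥ x) ⬝ᵥ (Vt *ᵥ x)
      ≤ ((K : ℝ) ^ 2 * specNorm Λ ^ 2 * μ) * (x ⬝ᵥ x) := by
    calc (Vt *ᵥ x) ⬝ᵥ (Vt *ᵥ x) ≤ (K : ℝ) ^ 2 * μ * ((Λ *ᵥ x) ⬝ᵥ (Λ *ᵥ x)) := hsum
      _ ≤ (K : ℝ) ^ 2 * μ * (specNorm Λ ^ 2 * (x ⬝ᵥ x)) := by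
          apply mul_le_mul_of_nonneg_left hspecΛ
          exact mul_nonneg (by positivity) hμ0
      _ = ((K : ℝ) ^ 2 * specNorm Λ ^ 2 * μ) * (x ⬝ᵥ x) := by ring
  -- normalization
  have hT : 0 < x ⬝ᵥ x := by
    rcases eq_or_lt_of_le (dot_self_nonneg' x) with h | h
    · exact absurd (dotProduct_self_eq_zero.mp h.symm) hx0
    · exact h
  set r : ℝ := Real.sqrt (x ⬝ᵥ x) with hrdef
  have hr0 : 0 < r := Real.sqrt_pos.mpr hT
  have hrr : r * r = x ⬝ᵥ x := Real.mul_self_sqrt hT.le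
  have hxsum : ∑ i, ((r⁻¹ • x) i) ^ 2 = 1 := by
    have hTsum : ∑ i, x i ^ 2 = x ⬝ᵥ x :=
      Finset.sum_congr rfl fun i _ => (pow_two _)
    calc ∑ i, ((r⁻¹ • x) i) ^ 2 = r⁻¹ ^ 2 * ∑ i, x i ^ 2 := by
          rw [Finset.mul_sum]
          exact Finset.sum_congr rfl fun i _ => by
            simp [Pi.smul_apply, smul_eq_mul, mul_pow]
      _ = r⁻¹ ^ 2 * (r * r) := by rw [hTsum, hrr]
      _ = 1 := by rw [pow_two]; field_simp
  have hquad : ∀ u : Fin n → ℝ,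
      u ⬝ᵥ ((Vtᵀ * Vt) *ᵥ u) = (Vt *ᵥ u) ⬝ᵥ (Vt *ᵥ u) := fun u => by
    rw [← Matrix.mulVec_mulVec, Matrix.dotProduct_mulVec, Matrix.vecMul_transpose]
  have hbdd : BddBelow (Set.range fun xx : {x : Fin n → ℝ // ∑ i, (x i) ^ 2 = 1} =>
      xx.1 ⬝ᵥ ((Vtᵀ * Vt) *ᵥ xx.1)) := by
    refine ⟨0, ?_⟩
    rintro _ ⟨xx, rfl⟩
    dsimp only
    rw [hquad]
    exact dot_self_nonneg' _
  have hle : lambdaMin (Vtᵀ * Vt) ≤ (r⁻¹ • x) ⬝ᵥ ((Vtᵀ * Vt) *ᵥ (r⁻¹ • x)) :=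
    ciInf_le hbdd (⟨r⁻¹ • x, hxsum⟩ : {x : Fin n → ℝ // ∑ i, (x i) ^ 2 = 1})
  refine hle.trans ?_
  rw [hquad, Matrix.mulVec_smul, smul_dotProduct, dotProduct_smul,
    smul_eq_mul, smul_eq_mul]
  calc r⁻¹ * (r⁻¹ * ((Vt *ᵥ x) ⬝ᵥ (Vt *ᵥ x)))
      = (r⁻¹ * r⁻¹) * ((Vt *ᵥ x) ⬝ᵥ (Vt *ᵥ x)) := by ring
    _ ≤ (r⁻¹ * r⁻¹) * (((K : ℝ) ^ 2 * specNorm Λ ^ 2 * μ) * (x ⬝ᵥ x)) :=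
        mul_le_mul_of_nonneg_left hfinal (by positivity)
    _ = ((K : ℝ) ^ 2 * specNorm Λ ^ 2 * μ) * ((r⁻¹ * r⁻¹) * (r * r)) := by
        rw [hrr]; ring
    _ = (K : ℝ) ^ 2 * specNorm Λ ^ 2 * μ := by
        field_simp
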